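/- Let X be a nonempty compact Hausdorff space and let (X; f_1, …, f_N) be a point-fibred iterated function system on X, with coding map π : I^∞ → X. Then π is continuous, where I^∞ = {1,…,N}^ℕ carries the product topology with each factor {1,…,N} discrete. -/

import Mathlib

/-- `seqComp f σ k = f (σ 0) ∘ f (σ 1) ∘ ⋯ ∘ f (σ (k-1))`, the composition of the
first `k` maps along the code `σ` (applied innermost-last). -/
def seqComp {X : Type*} {N : ℕ} (f : Fin N → X → X) (σ : ℕ → Fin N) : ℕ → X → X
  | 0 => id
  | k + 1 => seqComp f σ k ∘ f (σ k)

lemma seqComp_congr {X : Type*} {N : ℕ} (f : Fin N → X → X) {σ τ : ℕ → Fin N}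
    (k : ℕ) (h : ∀ i < k, σ i = τ i) : seqComp f σ k = seqComp f τ k := by
  induction k with
  | zero => rfl
  | succ k ih =>
    simp only [seqComp, ih (fun i hi => h i (Nat.lt_succ_of_lt hi)),
      h k (Nat.lt_succ_self k)]

lemma seqComp_continuous {X : Type*} [TopologicalSpace X] {N : ℕ}
    (f : Fin N → X → X) (hf : ∀ i, Continuous (f i)) (σ : ℕ → Fin N) (k : ℕ) :
    Continuous (seqComp f σ k) := by
  induction k with
  | zero => exact continuous_id
  | succ k ih => exact ih.comp (hf (σ k))

lemma seqComp_antitone {X : Type*} {N : ℕ} (f : Fin N → X → X) (σ : ℕ → Fin N) :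
    Antitone (fun k => seqComp f σ k '' (Set.univ : Set X)) := by
  apply antitone_nat_of_succ_le
  intro k
  show seqComp f σ (k+1) '' Set.univ ⊆ seqComp f σ k '' Set.univ
  rw [seqComp, Set.image_comp]
  exact Set.image_mono (Set.subset_univ _)

/-- For a point-fibred IFS `(X; f_1, …, f_N)` on a nonempty compact
Hausdorff space, the coding map `π : I^∞ → X` is continuous, where the code space
`I^∞ = {1,…,N}^ℕ` carries the product topology with discrete factors. -/
theorem coding_map_continuous
    {X : Type*} [TopologicalSpace X] [CompactSpace X] [T2Space X] [Nonempty X]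
    {N : ℕ} (hN : 0 < N) (f : Fin N → X → X) (hf : ∀ i, Continuous (f i))
    (π : (ℕ → Fin N) → X)
    (hπ : ∀ σ : ℕ → Fin N,
      (⋂ k : ℕ, seqComp f σ k '' (Set.univ : Set X)) = {π σ}) :
    Continuous π := by
  rw [continuous_def]
  intro U hU
  rw [isOpen_iff_mem_nhds]
  intro σ hσ
  set A : ℕ → Set X := fun k => seqComp f σ k '' Set.univ with hA
  have hAcomp : ∀ k, IsCompact (A k) := fun k =>
    isCompact_univ.image (seqComp_continuous f hf σ k)
  have hAclosed : ∀ k, IsClosed (A k) := fun k => (hAcomp k).isClosed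
  -- ⋂ A k = {π σ} ⊆ U
  have hsub : (⋂ k, A k) ⊆ U := by
    rw [hπ σ]; exact Set.singleton_subset_iff.mpr hσ
  -- find k with A k ⊆ U
  have : ∃ k, A k ⊆ U := by
    have hempty : (Set.univ : Set X) ∩ ⋂ k, A k ∩ Uᶜ = ∅ := by
      rw [Set.univ_inter, ← Set.iInter_inter, Set.eq_empty_iff_forall_notMem]
      intro x hx
      exact hx.2 (hsub hx.1)
    obtain ⟨t, ht⟩ := isCompact_univ.elim_finite_subfamily_closed
      (fun k => A k ∩ Uᶜ) (fun k => (hAclosed k).inter hU.isClosed_compl) hempty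
    rcases t.eq_empty_or_nonempty with rfl | hne
    · exfalso
      simp only [Finset.notMem_empty, Set.iInter_of_empty, Set.iInter_false,
        Set.inter_univ, Set.univ_inter] at ht
      exact Set.eq_empty_iff_forall_notMem.mp ht (π σ) (by simp)
    · obtain ⟨m, hm, hmax⟩ := t.exists_max_image id hne
      refine ⟨m, fun x hx => ?_⟩
      by_contra hxU
      have : x ∈ (Set.univ : Set X) ∩ ⋂ k ∈ t, A k ∩ Uᶜ := by
        refine ⟨trivial, Set.mem_iInter₂.mpr fun k hk => ⟨?_, hxU⟩⟩
        exact seqComp_antitone f σ (hmax k hk) hx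
      rw [ht] at this
      exact this
  obtain ⟨k, hk⟩ := this
  -- cylinder neighborhood
  have hVopen : IsOpen {τ : ℕ → Fin N | ∀ i < k, τ i = σ i} := by
    have : {τ : ℕ → Fin N | ∀ i < k, τ i = σ i}
        = ⋂ i ∈ Finset.range k, (fun τ : ℕ → Fin N => τ i) ⁻¹' {σ i} := by
      ext τ
      simp [Finset.mem_range]
    rw [this]
    exact isOpen_biInter_finset fun i _ =>
      (continuous_apply i).isOpen_preimage _ (isOpen_discrete _)
  refine Filter.mem_of_superset (hVopen.mem_nhds (fun i _ => rfl)) ?_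
  intro τ hτ
  have heq : seqComp f τ k = seqComp f σ k := seqComp_congr f k hτ
  have : π τ ∈ ⋂ m, seqComp f τ m '' Set.univ := by
    rw [hπ τ]; rfl
  have hmem : π τ ∈ A k := by
    rw [hA]
    have := Set.mem_iInter.mp this k
    rwa [heq] at this
  exact hk hmem
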